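/- Block-diagonality of the chi matrix is equivalent to superselection-rule validity: let χ be a family of complex coefficients indexed by pairs of binary vectors ū, ū' ∈ {0,1}^{2m}, and define the linear map M(X) = Σ_{ū,ū'} χ_{ū,ū'} C_ū X C_ū' on 2^m × 2^m complex matrices. Then the Choi matrix Choi(M) commutes with C ⊗ C if and only if χ_{ū,ū'} = 0 for all pairs with |ū| ≢ |ū'| (mod 2). -/

import Mathlib

open Matrix

noncomputable section

def σI : Matrix (Fin 2) (Fin 2) ℂ := 1
def σX : Matrix (Fin 2) (Fin 2) ℂ := !![0, 1; 1, 0]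
def σY : Matrix (Fin 2) (Fin 2) ℂ := !![0, -Complex.I; Complex.I, 0]
def σZ : Matrix (Fin 2) (Fin 2) ℂ := !![1, 0; 0, -1]

/-- Tensor product over `m` qubit sites of single-site matrices. -/
def tensProd (m : ℕ) (f : Fin m → Matrix (Fin 2) (Fin 2) ℂ) :
    Matrix (Fin m → Fin 2) (Fin m → Fin 2) ℂ :=
  Matrix.of fun n n' => ∏ j, f j (n j) (n' j)

/-- Jordan–Wigner Majorana operators, 0-indexed: `majorana m k` is `c_{k+1}`,
i.e. `c_{2i-1} = X_i Z_{i+1} ⋯ Z_m` and `c_{2i} = Y_i Z_{i+1} ⋯ Z_m`. -/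
def majorana (m : ℕ) (k : Fin (2 * m)) :
    Matrix (Fin m → Fin 2) (Fin m → Fin 2) ℂ :=
  tensProd m fun j =>
    if (j : ℕ) < (k : ℕ) / 2 then σI
    else if (j : ℕ) = (k : ℕ) / 2 then (if (k : ℕ) % 2 = 0 then σX else σY)
    else σZ

/-- Hamming weight of a binary vector. -/
def hw {n : ℕ} (u : Fin n → Bool) : ℕ := ∑ k, if u k then 1 else 0

/-- Majorana product operator `C_ū = i^⌊|ū|/2⌋ c_1^{u_1} ⋯ c_{2m}^{u_{2m}}`. -/
def Cu (m : ℕ) (u : Fin (2 * m) → Bool) :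
    Matrix (Fin m → Fin 2) (Fin m → Fin 2) ℂ :=
  Complex.I ^ (hw u / 2) •
    ((List.finRange (2 * m)).map fun k => if u k then majorana m k else 1).prod

/-- Parity operator `C = Z^{⊗m}`. -/
def parity (m : ℕ) : Matrix (Fin m → Fin 2) (Fin m → Fin 2) ℂ :=
  tensProd m fun _ => σZ

/-- The slice of a matrix on a product index, fixing the second components. -/
def matSlice {A B : Type*} (b b' : B) :
    Matrix (A × B) (A × B) ℂ →ₗ[ℂ] Matrix A A ℂ where
  toFun X := Matrix.of fun a a' => X (a, b) (a', b')
  map_add' _ _ := rfl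
  map_smul' _ _ := rfl

/-- The induced map `M ⊗ id` on a composite system. -/
def tensId {A B : Type*} (M : Matrix A A ℂ →ₗ[ℂ] Matrix A A ℂ) :
    Matrix (A × B) (A × B) ℂ →ₗ[ℂ] Matrix (A × B) (A × B) ℂ where
  toFun X := Matrix.of fun p q => M (matSlice p.2 q.2 X) p.1 q.1
  map_add' X Y := by
    ext ⟨a, b⟩ ⟨a', b'⟩
    simp [Matrix.add_apply, map_add]
  map_smul' c X := by
    ext ⟨a, b⟩ ⟨a', b'⟩
    simp [Matrix.smul_apply, _root_.map_smul]

/-- The (unnormalised) maximally entangled state `|Φ⟩⟨Φ|`,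
`Φ = ∑ n̄, |n̄⟩ ⊗ |n̄⟩`. -/
def phiMat (A : Type*) [DecidableEq A] : Matrix (A × A) (A × A) ℂ :=
  Matrix.of fun p q => (if p.1 = p.2 then 1 else 0) * (if q.1 = q.2 then 1 else 0)

/-- The Choi matrix `Choi(M) = (M ⊗ id)(|Φ⟩⟨Φ|)`. -/
def choi {A : Type*} [DecidableEq A] (M : Matrix A A ℂ →ₗ[ℂ] Matrix A A ℂ) :
    Matrix (A × A) (A × A) ℂ :=
  tensId M (phiMat A)

/-- The linear map `X ↦ ∑_{ū,ū'} χ_{ū,ū'} C_ū X C_ū'` determined by a chi matrix. -/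
def chiMap (m : ℕ) (χ : (Fin (2 * m) → Bool) → (Fin (2 * m) → Bool) → ℂ) :
    Matrix (Fin m → Fin 2) (Fin m → Fin 2) ℂ →ₗ[ℂ]
      Matrix (Fin m → Fin 2) (Fin m → Fin 2) ℂ where
  toFun X := ∑ u, ∑ u', χ u u' • (Cu m u * X * Cu m u')
  map_add' X Y := by
    simp [Matrix.mul_add, Matrix.add_mul, smul_add, Finset.sum_add_distrib]
  map_smul' c X := by
    simp [Matrix.mul_smul, Matrix.smul_mul, Finset.smul_sum, smul_smul, mul_comm]


/-! ### Auxiliary development -/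

lemma tensProd_mul (m : ℕ) (f g : Fin m → Matrix (Fin 2) (Fin 2) ℂ) :
    tensProd m f * tensProd m g = tensProd m (fun j => f j * g j) := by
  ext n n'
  simp only [tensProd, Matrix.mul_apply, Matrix.of_apply, ← Finset.prod_mul_distrib]
  exact (Fintype.prod_sum (fun j x => f j (n j) x * g j x (n' j))).symm

lemma tensProd_one (m : ℕ) : tensProd m (fun _ => 1) = 1 := by
  ext n n'
  simp only [tensProd, Matrix.of_apply, Matrix.one_apply]
  by_cases h : n = n'
  · rw [if_pos h]; subst h; simp [Matrix.one_apply]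
  · rw [if_neg h]
    obtain ⟨j, hj⟩ := Function.ne_iff.mp h
    exact Finset.prod_eq_zero (Finset.mem_univ j) (by simp [Matrix.one_apply, hj])

lemma tensProd_smul (m : ℕ) (z : Fin m → ℂ) (f : Fin m → Matrix (Fin 2) (Fin 2) ℂ) :
    tensProd m (fun j => z j • f j) = (∏ j, z j) • tensProd m f := by
  ext n n'
  simp [tensProd, Finset.prod_mul_distrib, mul_comm]

/-- Pauli matrix labelled by (x,z) ∈ (ZMod 2)². -/
def pm : ZMod 2 × ZMod 2 → Matrix (Fin 2) (Fin 2) ℂ :=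
  fun p => if p.1 = 0 then (if p.2 = 0 then σI else σZ) else (if p.2 = 0 then σX else σY)

lemma pm_zero : pm 0 = 1 := by simp [pm, σI]

/-- Phase in the Pauli multiplication law. -/
def ph : ZMod 2 × ZMod 2 → ZMod 2 × ZMod 2 → ℂ := fun p q =>
  if p = 0 ∨ q = 0 ∨ p = q then 1
  else if (p, q) = ((1, 0), (1, 1)) ∨ (p, q) = ((1, 1), (0, 1)) ∨ (p, q) = ((0, 1), (1, 0))
    then Complex.I else -Complex.I

lemma ph_ne (p q : ZMod 2 × ZMod 2) : ph p q ≠ 0 := by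
  unfold ph; split_ifs <;> simp [Complex.I_ne_zero]

lemma pm_mul (p q : ZMod 2 × ZMod 2) : pm p * pm q = ph p q • pm (p + q) := by
  have h2 : ∀ x : ZMod 2, x = 0 ∨ x = 1 := by decide
  obtain ⟨x, z⟩ := p; obtain ⟨x', z'⟩ := q
  rcases h2 x with rfl | rfl <;> rcases h2 z with rfl | rfl <;>
    rcases h2 x' with rfl | rfl <;> rcases h2 z' with rfl | rfl <;>
  · ext i j
    fin_cases i <;> fin_cases j <;>
      simp [ph, pm, σI, σX, σY, σZ, Matrix.mul_apply, Fin.sum_univ_two, Matrix.one_apply,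
        Matrix.smul_apply, Complex.I_mul_I, Prod.ext_iff, Prod.mk_add_mk, Prod.fst_add,
        Prod.snd_add, add_zero, zero_add, show (1+1 : ZMod 2) = 0 by decide,
        show (1 : ZMod 2) ≠ 0 by decide, show (0 : ZMod 2) ≠ 1 by decide] <;>
      norm_num [Complex.ext_iff]

lemma pm_orth (p q : ZMod 2 × ZMod 2) :
    (∑ a : Fin 2, ∑ b : Fin 2, (starRingEnd ℂ) (pm p a b) * pm q a b) =
      if p = q then 2 else 0 := by
  have h2 : ∀ x : ZMod 2, x = 0 ∨ x = 1 := by decide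
  obtain ⟨x, z⟩ := p; obtain ⟨x', z'⟩ := q
  rcases h2 x with rfl | rfl <;> rcases h2 z with rfl | rfl <;>
    rcases h2 x' with rfl | rfl <;> rcases h2 z' with rfl | rfl
  all_goals simp [pm, σI, σX, σY, σZ, Fin.sum_univ_two, Matrix.one_apply, Prod.ext_iff,
      Complex.conj_I, mul_comm, Complex.I_mul_I] <;> norm_num

/-- Pauli string operator. -/
def Pstr (m : ℕ) (w : Fin m → ZMod 2 × ZMod 2) :
    Matrix (Fin m → Fin 2) (Fin m → Fin 2) ℂ :=
  tensProd m fun j => pm (w j)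

lemma Pstr_zero (m : ℕ) : Pstr m 0 = 1 := by
  unfold Pstr
  simp only [Pi.zero_apply, pm_zero]
  exact tensProd_one m

lemma Pstr_mul (m : ℕ) (w v : Fin m → ZMod 2 × ZMod 2) :
    Pstr m w * Pstr m v = (∏ j, ph (w j) (v j)) • Pstr m (w + v) := by
  unfold Pstr
  rw [tensProd_mul, ← tensProd_smul]
  have : (fun j => pm (w j) * pm (v j))
      = fun j => ph (w j) (v j) • pm ((w + v) j) := by
    funext j; rw [pm_mul]; rfl
  rw [this]

lemma Pstr_orth (m : ℕ) (w v : Fin m → ZMod 2 × ZMod 2) :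
    (∑ a : Fin m → Fin 2, ∑ b : Fin m → Fin 2,
        (starRingEnd ℂ) (Pstr m w a b) * Pstr m v a b) =
      if w = v then (2 : ℂ) ^ m else 0 := by
  have step : ∀ a : Fin m → Fin 2,
      (∑ b : Fin m → Fin 2, (starRingEnd ℂ) (Pstr m w a b) * Pstr m v a b)
        = ∏ j, ∑ y : Fin 2, (starRingEnd ℂ) (pm (w j) (a j) y) * pm (v j) (a j) y := by
    intro a
    have : ∀ b : Fin m → Fin 2, (starRingEnd ℂ) (Pstr m w a b) * Pstr m v a b
        = ∏ j, (starRingEnd ℂ) (pm (w j) (a j) (b j)) * pm (v j) (a j) (b j) := by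
      intro b
      simp [Pstr, tensProd, map_prod, Finset.prod_mul_distrib]
    simp only [this]
    exact (Fintype.prod_sum (fun j y => (starRingEnd ℂ) (pm (w j) (a j) y) * pm (v j) (a j) y)).symm
  simp only [step]
  rw [(Fintype.prod_sum (fun j x => ∑ y : Fin 2,
      (starRingEnd ℂ) (pm (w j) x y) * pm (v j) x y)).symm]
  have : ∀ j, (∑ x : Fin 2, ∑ y : Fin 2, (starRingEnd ℂ) (pm (w j) x y) * pm (v j) x y)
      = if w j = v j then 2 else 0 := fun j => pm_orth (w j) (v j)
  simp only [this]
  by_cases h : w = v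
  · subst h; simp
  · rw [if_neg h]
    obtain ⟨j, hj⟩ := Function.ne_iff.mp h
    exact Finset.prod_eq_zero (Finset.mem_univ j) (by rw [if_neg hj])

/-- Pauli-string label of a single Majorana operator. -/
def mstr (m : ℕ) (k : Fin (2 * m)) : Fin m → ZMod 2 × ZMod 2 := fun j =>
  if (j : ℕ) < (k : ℕ) / 2 then 0
  else if (j : ℕ) = (k : ℕ) / 2 then (1, if (k : ℕ) % 2 = 0 then 0 else 1)
  else (0, 1)

lemma majorana_eq (m : ℕ) (k : Fin (2 * m)) : majorana m k = Pstr m (mstr m k) := by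
  have : (fun j : Fin m =>
      if (j : ℕ) < (k : ℕ) / 2 then σI
      else if (j : ℕ) = (k : ℕ) / 2 then (if (k : ℕ) % 2 = 0 then σX else σY)
      else σZ) = fun j => pm (mstr m k j) := by
    funext j
    unfold mstr
    split_ifs <;> simp_all [pm, σI, show (1 : ZMod 2) ≠ 0 by decide]
  unfold majorana Pstr
  rw [this]

/-- Total Pauli-string label of `Cu`. -/
def wstr (m : ℕ) (u : Fin (2 * m) → Bool) : Fin m → ZMod 2 × ZMod 2 :=
  ∑ k, if u k then mstr m k else 0

lemma prod_map_eq (m : ℕ) (u : Fin (2 * m) → Bool) (l : List (Fin (2 * m))) :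
    ∃ z : ℂ, z ≠ 0 ∧ (l.map fun k => if u k then majorana m k else 1).prod
      = z • Pstr m (l.map fun k => if u k then mstr m k else 0).sum := by
  induction l with
  | nil => exact ⟨1, one_ne_zero, by simp [Pstr_zero m]⟩
  | cons k l ih =>
    obtain ⟨z, hz, he⟩ := ih
    simp only [List.map_cons, List.prod_cons, List.sum_cons, he]
    by_cases hu : u k
    · simp only [if_pos hu]
      refine ⟨z * ∏ j, ph (mstr m k j) ((l.map fun k => if u k then mstr m k else 0).sum j),
        mul_ne_zero hz (Finset.prod_ne_zero_iff.mpr fun j _ => ph_ne _ _), ?_⟩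
      rw [majorana_eq, Matrix.mul_smul, Pstr_mul, smul_smul]
    · simp only [if_neg hu]
      exact ⟨z, hz, by simp⟩

lemma Cu_eq (m : ℕ) (u : Fin (2 * m) → Bool) :
    ∃ z : ℂ, z ≠ 0 ∧ Cu m u = z • Pstr m (wstr m u) := by
  obtain ⟨z, hz, he⟩ := prod_map_eq m u (List.finRange (2 * m))
  refine ⟨Complex.I ^ (hw u / 2) * z,
    mul_ne_zero (pow_ne_zero _ Complex.I_ne_zero) hz, ?_⟩
  have hsum : ((List.finRange (2 * m)).map fun k => if u k then mstr m k else 0).sum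
      = wstr m u := by
    rw [wstr, Fin.sum_univ_def]
  rw [Cu, he, hsum, smul_smul]

lemma sum_peel (m : ℕ) (u u' : Fin (2 * m) → Bool) (k : Fin (2 * m))
    (c : Fin (2 * m) → ZMod 2) (hck : c k = 1)
    (hagree : ∀ k', k' ≠ k → c k' ≠ 0 → u k' = u' k')
    (hsum : (∑ k', if u k' then c k' else 0) = ∑ k', if u' k' then c k' else 0) :
    u k = u' k := by
  rw [← Finset.add_sum_erase _ _ (Finset.mem_univ k),
    ← Finset.add_sum_erase _ _ (Finset.mem_univ k)] at hsum
  have hrest : (∑ k' ∈ Finset.univ.erase k, if u k' then c k' else 0)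
      = ∑ k' ∈ Finset.univ.erase k, if u' k' then c k' else 0 := by
    refine Finset.sum_congr rfl fun k' hk' => ?_
    by_cases hc : c k' = 0
    · simp [hc]
    · rw [hagree k' (Finset.ne_of_mem_erase hk') hc]
  rw [hrest] at hsum
  have h2 : (if u k then c k else 0) = (if u' k then c k else 0) :=
    add_right_cancel hsum
  rw [hck] at h2
  by_cases h : u k <;> by_cases h' : u' k <;> simp_all

lemma wstr_inj (m : ℕ) (u u' : Fin (2 * m) → Bool) (h : wstr m u = wstr m u') :
    u = u' := by
  suffices H : ∀ N, ∀ k : Fin (2 * m), (k : ℕ) < N → u k = u' k by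
    funext k; exact H ((k : ℕ) + 1) k (Nat.lt_succ_self _)
  intro N
  induction N with
  | zero => exact fun k hk => absurd hk (Nat.not_lt_zero _)
  | succ N IH =>
    intro k hk
    rcases Nat.lt_or_ge (k : ℕ) N with h' | h'
    · exact IH k h'
    · have hkN : (k : ℕ) = N := by omega
      have hj : (k : ℕ) / 2 < m := by have := k.isLt; omega
      set jF : Fin m := ⟨(k : ℕ) / 2, hj⟩ with hjF
      have hjFv : (jF : ℕ) = (k : ℕ) / 2 := rfl
      have hcomp : wstr m u jF = wstr m u' jF := by rw [h]
      have hite1 : ∀ (v : Fin (2 * m) → Bool) (c : Fin (2 * m)),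
          ((if v c then mstr m c else 0) jF).1 = if v c then (mstr m c jF).1 else 0 := by
        intro v c; by_cases hv : v c <;> simp [hv]
      have hite2 : ∀ (v : Fin (2 * m) → Bool) (c : Fin (2 * m)),
          ((if v c then mstr m c else 0) jF).2 = if v c then (mstr m c jF).2 else 0 := by
        intro v c; by_cases hv : v c <;> simp [hv]
      have hfst : (∑ k', if u k' then (mstr m k' jF).1 else 0)
          = ∑ k', if u' k' then (mstr m k' jF).1 else 0 := by
        have h0 := congrArg Prod.fst hcomp
        simp only [wstr, Finset.sum_apply, Prod.fst_sum, hite1] at h0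
        exact h0
      have hsnd : (∑ k', if u k' then (mstr m k' jF).2 else 0)
          = ∑ k', if u' k' then (mstr m k' jF).2 else 0 := by
        have h0 := congrArg Prod.snd hcomp
        simp only [wstr, Finset.sum_apply, Prod.snd_sum, hite2] at h0
        exact h0
      -- IH in convenient form
      have IH' : ∀ k' : Fin (2 * m), (k' : ℕ) < (k : ℕ) → u k' = u' k' :=
        fun k' hlt => IH k' (by omega)
      rcases Nat.even_or_odd (k : ℕ) with hpar | hpar
      · -- k even : use fst + snd
        have hk2 : (k : ℕ) % 2 = 0 := Nat.even_iff.mp hpar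
        have hcval : ∀ k' : Fin (2 * m), (mstr m k' jF).1 + (mstr m k' jF).2
            = if (k' : ℕ) ≤ (k : ℕ) then 1 else 0 := by
          intro k'
          unfold mstr
          simp only [hjFv]
          split_ifs <;> first | rfl | decide | (exfalso; omega)
        have esplit : ∀ v : Fin (2 * m) → Bool,
            (∑ k', if v k' then ((mstr m k' jF).1 + (mstr m k' jF).2) else 0)
              = (∑ k', if v k' then (mstr m k' jF).1 else 0)
                + ∑ k', if v k' then (mstr m k' jF).2 else 0 := by
          intro v
          rw [← Finset.sum_add_distrib]
          refine Finset.sum_congr rfl fun k' _ => ?_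
          by_cases hv : v k' <;> simp [hv]
        refine sum_peel m u u' k (fun k' => if (k' : ℕ) ≤ (k : ℕ) then 1 else 0)
          (by simp) (fun k' hne hnz => ?_) ?_
        · have hle : (k' : ℕ) ≤ (k : ℕ) := by
            by_contra hgt; exact hnz (by simp [hgt])
          exact IH' k' (lt_of_le_of_ne hle (fun he => hne (Fin.ext he)))
        · have := hsnd
          calc (∑ k', if u k' then (if (k' : ℕ) ≤ (k : ℕ) then (1 : ZMod 2) else 0) else 0)
              = ∑ k', if u k' then ((mstr m k' jF).1 + (mstr m k' jF).2) else 0 := by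
                simp only [hcval]
            _ = ∑ k', if u' k' then ((mstr m k' jF).1 + (mstr m k' jF).2) else 0 := by
                rw [esplit, esplit, hfst, hsnd]
            _ = ∑ k', if u' k' then (if (k' : ℕ) ≤ (k : ℕ) then (1 : ZMod 2) else 0) else 0 := by
                simp only [hcval]
      · -- k odd : use snd
        have hk2 : (k : ℕ) % 2 = 1 := Nat.odd_iff.mp hpar
        have hcval : ∀ k' : Fin (2 * m), (mstr m k' jF).2
            = if (k' : ℕ) < 2 * ((k : ℕ) / 2) ∨ (k' : ℕ) = (k : ℕ) then 1 else 0 := by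
          intro k'
          unfold mstr
          simp only [hjFv]
          split_ifs <;> first | rfl | decide | (exfalso; omega)
        refine sum_peel m u u' k
          (fun k' => if (k' : ℕ) < 2 * ((k : ℕ) / 2) ∨ (k' : ℕ) = (k : ℕ) then 1 else 0)
          (by simp) (fun k' hne hnz => ?_) ?_
        · have hor : (k' : ℕ) < 2 * ((k : ℕ) / 2) ∨ (k' : ℕ) = (k : ℕ) := by
            by_contra hgt; exact hnz (by simp only [if_neg hgt])
          have hlt : (k' : ℕ) < (k : ℕ) := by
            rcases hor with h1 | h1
            · omega
            · exact absurd (Fin.ext h1) hne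
          exact IH' k' hlt
        · calc (∑ k', if u k' then
                (if (k' : ℕ) < 2 * ((k : ℕ) / 2) ∨ (k' : ℕ) = (k : ℕ) then (1 : ZMod 2) else 0) else 0)
              = ∑ k', if u k' then (mstr m k' jF).2 else 0 := by simp only [hcval]
            _ = ∑ k', if u' k' then (mstr m k' jF).2 else 0 := hsnd
            _ = ∑ k', if u' k' then
                (if (k' : ℕ) < 2 * ((k : ℕ) / 2) ∨ (k' : ℕ) = (k : ℕ) then (1 : ZMod 2) else 0) else 0 := by
                simp only [hcval]

/-- Sign of a basis state on one site. -/
def sg (x : Fin 2) : ℂ := if x = 0 then 1 else -1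

/-- Total sign (parity eigenvalue) of a Fock basis state. -/
def εf {m : ℕ} (a : Fin m → Fin 2) : ℂ := ∏ j, sg (a j)

lemma σZ_apply (x y : Fin 2) : σZ x y = if x = y then sg x else 0 := by
  fin_cases x <;> fin_cases y <;> simp [σZ, sg]

lemma parity_apply {m : ℕ} (a b : Fin m → Fin 2) :
    parity m a b = if a = b then εf a else 0 := by
  unfold parity tensProd εf
  simp only [Matrix.of_apply, σZ_apply]
  by_cases h : a = b
  · subst h; simp
  · rw [if_neg h]
    obtain ⟨j, hj⟩ := Function.ne_iff.mp h
    exact Finset.prod_eq_zero (Finset.mem_univ j) (by rw [if_neg hj])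

lemma sg_sq (x : Fin 2) : sg x * sg x = 1 := by fin_cases x <;> simp [sg]

lemma sg_ne (x : Fin 2) : sg x ≠ 0 := by fin_cases x <;> simp [sg]

lemma εf_ne {m : ℕ} (a : Fin m → Fin 2) : εf a ≠ 0 :=
  Finset.prod_ne_zero_iff.mpr fun j _ => sg_ne _

lemma parity_sq (m : ℕ) : parity m * parity m = 1 := by
  unfold parity
  rw [tensProd_mul]
  have : (fun _ : Fin m => σZ * σZ) = fun _ => (1 : Matrix (Fin 2) (Fin 2) ℂ) := by
    funext j
    ext x y
    fin_cases x <;> fin_cases y <;>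
      simp [σZ, Matrix.mul_apply, Fin.sum_univ_two, Matrix.one_apply]
  rw [this, tensProd_one]

lemma parity_conj_majorana (m : ℕ) (k : Fin (2 * m)) :
    parity m * majorana m k * parity m = (-1 : ℂ) • majorana m k := by
  unfold parity majorana
  rw [tensProd_mul, tensProd_mul]
  have hj : (k : ℕ) / 2 < m := by have := k.isLt; omega
  have key : (fun j : Fin m => σZ *
        (if (j : ℕ) < (k : ℕ) / 2 then σI
          else if (j : ℕ) = (k : ℕ) / 2 then (if (k : ℕ) % 2 = 0 then σX else σY)
          else σZ) * σZ)
      = fun j : Fin m => (if j = (⟨(k : ℕ) / 2, hj⟩ : Fin m) then (-1 : ℂ) else 1) •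
        (if (j : ℕ) < (k : ℕ) / 2 then σI
          else if (j : ℕ) = (k : ℕ) / 2 then (if (k : ℕ) % 2 = 0 then σX else σY)
          else σZ) := by
    funext j
    have hjj : (j = (⟨(k : ℕ) / 2, hj⟩ : Fin m)) ↔ ((j : ℕ) = (k : ℕ) / 2) := by
      constructor
      · intro h; rw [h]
      · intro h; exact Fin.ext h
    split_ifs with h1 h2 h3 h4 h5 <;>
      first
        | (exfalso; omega)
        | (exfalso; exact absurd (hjj.mp ‹_›) (by omega))
        | (exfalso; exact absurd (hjj.mpr ‹_›) ‹_›)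
        | (ext x y; fin_cases x <;> fin_cases y <;>
            simp [σI, σX, σY, σZ, Matrix.mul_apply, Fin.sum_univ_two, Matrix.one_apply,
              Matrix.smul_apply])
  rw [key, tensProd_smul]
  congr 1
  rw [Finset.prod_ite_eq' Finset.univ (⟨(k : ℕ) / 2, hj⟩ : Fin m) (fun _ => (-1 : ℂ))]
  simp

lemma parity_conj_prod (m : ℕ) (u : Fin (2 * m) → Bool) (l : List (Fin (2 * m))) :
    parity m * (l.map fun k => if u k then majorana m k else 1).prod * parity m
      = ((l.map fun k => if u k then (-1 : ℂ) else 1).prod) •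
          (l.map fun k => if u k then majorana m k else 1).prod := by
  induction l with
  | nil => simpa using parity_sq m
  | cons k l ih =>
    simp only [List.map_cons, List.prod_cons]
    have h1' : ∀ X : Matrix (Fin m → Fin 2) (Fin m → Fin 2) ℂ,
        parity m * (parity m * X) = X := fun X => by
      rw [← Matrix.mul_assoc, parity_sq, Matrix.one_mul]
    have assoc : parity m * ((if u k then majorana m k else 1) *
          (l.map fun k => if u k then majorana m k else 1).prod) * parity m
        = (parity m * (if u k then majorana m k else 1) * parity m) *
          (parity m * (l.map fun k => if u k then majorana m k else 1).prod * parity m) := by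
      simp only [Matrix.mul_assoc, h1']
    rw [assoc, ih]
    by_cases hu : u k
    · simp only [if_pos hu]
      rw [parity_conj_majorana, Matrix.smul_mul, Matrix.mul_smul, smul_smul]
    · simp only [if_neg hu]
      simp [Matrix.mul_one, parity_sq m]

lemma parity_conj_Cu (m : ℕ) (u : Fin (2 * m) → Bool) :
    parity m * Cu m u * parity m = ((-1 : ℂ) ^ hw u) • Cu m u := by
  unfold Cu
  rw [Matrix.mul_smul, Matrix.smul_mul, parity_conj_prod, smul_smul, smul_smul, mul_comm]
  congr 2
  rw [← Fin.prod_univ_def (fun k => if u k then (-1 : ℂ) else 1)]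
  have : ∀ k : Fin (2 * m), (if u k then (-1 : ℂ) else 1) = (-1 : ℂ) ^ (if u k then 1 else 0) := by
    intro k; by_cases h : u k <;> simp [h]
  simp only [this]
  rw [Finset.prod_pow_eq_pow_sum]
  rfl

/-- Multiplying by the diagonal `parity` on the right/left. -/
lemma mul_parity_apply {m : ℕ} (M : Matrix (Fin m → Fin 2) (Fin m → Fin 2) ℂ)
    (a b : Fin m → Fin 2) : (M * parity m) a b = M a b * εf b := by
  rw [Matrix.mul_apply]
  simp only [parity_apply, mul_ite, mul_zero]
  rw [Finset.sum_ite_eq' Finset.univ b (fun c => M a c * εf c)]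
  simp

lemma parity_mul_apply {m : ℕ} (M : Matrix (Fin m → Fin 2) (Fin m → Fin 2) ℂ)
    (a b : Fin m → Fin 2) : (parity m * M) a b = εf a * M a b := by
  rw [Matrix.mul_apply]
  simp only [parity_apply, ite_mul, zero_mul]
  rw [Finset.sum_ite_eq Finset.univ a (fun c => εf a * M c b)]
  simp

/-- Entrywise parity-support property of `Cu`. -/
lemma Cu_support (m : ℕ) (u : Fin (2 * m) → Bool) (a b : Fin m → Fin 2)
    (hne : Cu m u a b ≠ 0) : εf a * εf b = (-1 : ℂ) ^ hw u := by
  have h := congrFun (congrFun (congrArg (fun M x y => M x y) (parity_conj_Cu m u)) a) b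
  rw [mul_parity_apply, parity_mul_apply] at h
  simp only [Matrix.smul_apply, smul_eq_mul] at h
  have h2 : (εf a * εf b) * Cu m u a b = ((-1 : ℂ) ^ hw u) * Cu m u a b := by
    rw [← h]; ring
  exact mul_right_cancel₀ hne h2

lemma Cu_orth (m : ℕ) (u v : Fin (2 * m) → Bool) :
    ∃ c : ℂ, c ≠ 0 ∧
      (∑ a : Fin m → Fin 2, ∑ b : Fin m → Fin 2,
          (starRingEnd ℂ) (Cu m u a b) * Cu m v a b)
        = if u = v then c else 0 := by
  obtain ⟨z, hz, hz'⟩ := Cu_eq m u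
  obtain ⟨z', hz2, hz2'⟩ := Cu_eq m v
  refine ⟨(starRingEnd ℂ) z * z' * (2 : ℂ) ^ m, by
    refine mul_ne_zero (mul_ne_zero ?_ hz2) (pow_ne_zero _ two_ne_zero)
    simpa using hz, ?_⟩
  have : (∑ a : Fin m → Fin 2, ∑ b : Fin m → Fin 2,
        (starRingEnd ℂ) (Cu m u a b) * Cu m v a b)
      = (starRingEnd ℂ) z * z' * ∑ a : Fin m → Fin 2, ∑ b : Fin m → Fin 2,
          (starRingEnd ℂ) (Pstr m (wstr m u) a b) * Pstr m (wstr m v) a b := by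
    rw [hz', hz2']
    rw [Finset.mul_sum]
    refine Finset.sum_congr rfl fun a _ => ?_
    rw [Finset.mul_sum]
    refine Finset.sum_congr rfl fun b _ => ?_
    simp only [Matrix.smul_apply, smul_eq_mul, _root_.map_mul]
    ring
  rw [this, Pstr_orth]
  by_cases h : u = v
  · subst h; simp
  · rw [if_neg h, if_neg (fun he => h (wstr_inj m u v he)), mul_zero]

lemma middle_mul {α : Type*} [Fintype α] [DecidableEq α] (Y Z : Matrix α α ℂ)
    (a a' b b' : α) :
    (Y * (Matrix.of fun c c' => (if c = b then (1 : ℂ) else 0) *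
        (if c' = b' then 1 else 0)) * Z) a a' = Y a b * Z b' a' := by
  rw [Matrix.mul_assoc, Matrix.mul_apply]
  have hmid : ∀ c, ((Matrix.of fun c c' => (if c = b then (1 : ℂ) else 0) *
      (if c' = b' then 1 else 0)) * Z) c a'
        = (if c = b then (1 : ℂ) else 0) * Z b' a' := by
    intro c
    rw [Matrix.mul_apply]
    simp only [Matrix.of_apply, mul_assoc, ← Finset.mul_sum]
    congr 1
    simp [ite_mul, zero_mul, one_mul, Finset.sum_ite_eq']
  simp only [hmid]
  simp [mul_ite, ite_mul, zero_mul, mul_zero, one_mul, Finset.sum_ite_eq', ← mul_assoc]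

lemma choi_entry (m : ℕ) (χ : (Fin (2 * m) → Bool) → (Fin (2 * m) → Bool) → ℂ)
    (a b a' b' : Fin m → Fin 2) :
    choi (chiMap m χ) (a, b) (a', b')
      = ∑ u, ∑ u', χ u u' * (Cu m u a b * Cu m u' b' a') := by
  have hsl : matSlice b b' (phiMat (Fin m → Fin 2))
      = Matrix.of fun c c' => (if c = b then (1 : ℂ) else 0) * (if c' = b' then 1 else 0) := by
    ext c c'
    show phiMat (Fin m → Fin 2) (c, b) (c', b') = _
    simp [matSlice, phiMat]
  have h1 : choi (chiMap m χ) (a, b) (a', b')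
      = (chiMap m χ) (matSlice b b' (phiMat (Fin m → Fin 2))) a a' := rfl
  set E : Matrix (Fin m → Fin 2) (Fin m → Fin 2) ℂ :=
    Matrix.of fun c c' => (if c = b then (1 : ℂ) else 0) * (if c' = b' then 1 else 0) with hE
  have h2 : (chiMap m χ) E = ∑ u, ∑ u', χ u u' • (Cu m u * E * Cu m u') := rfl
  rw [h1, hsl, h2, Matrix.sum_apply]
  refine Finset.sum_congr rfl fun u _ => ?_
  rw [Matrix.sum_apply]
  refine Finset.sum_congr rfl fun u' _ => ?_
  rw [Matrix.smul_apply, hE, middle_mul]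
  rfl

open Kronecker

lemma kron_diag (m : ℕ) (p q : (Fin m → Fin 2) × (Fin m → Fin 2)) :
    (parity m ⊗ₖ parity m) p q = if p = q then εf p.1 * εf p.2 else 0 := by
  rcases p with ⟨a, b⟩; rcases q with ⟨c, d⟩
  simp only [Matrix.kroneckerMap_apply, parity_apply, Prod.mk.injEq]
  by_cases h1 : a = c <;> by_cases h2 : b = d <;> simp [h1, h2]

lemma kron_mul_apply (m : ℕ) (K : Matrix (((Fin m → Fin 2) × (Fin m → Fin 2)))
    (((Fin m → Fin 2) × (Fin m → Fin 2))) ℂ) (p q : (Fin m → Fin 2) × (Fin m → Fin 2)) :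
    ((parity m ⊗ₖ parity m) * K) p q = (εf p.1 * εf p.2) * K p q := by
  rw [Matrix.mul_apply]
  simp only [kron_diag, ite_mul, zero_mul]
  rw [Finset.sum_ite_eq Finset.univ p (fun r => εf p.1 * εf p.2 * K r q)]
  simp

lemma mul_kron_apply (m : ℕ) (K : Matrix (((Fin m → Fin 2) × (Fin m → Fin 2)))
    (((Fin m → Fin 2) × (Fin m → Fin 2))) ℂ) (p q : (Fin m → Fin 2) × (Fin m → Fin 2)) :
    (K * (parity m ⊗ₖ parity m)) p q = K p q * (εf q.1 * εf q.2) := by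
  rw [Matrix.mul_apply]
  simp only [kron_diag, mul_ite, mul_zero]
  rw [Finset.sum_ite_eq' Finset.univ q (fun r => K p r * (εf r.1 * εf r.2))]
  simp

lemma np (n : ℕ) : (-1 : ℂ) ^ n = if n % 2 = 0 then 1 else -1 := by
  rcases Nat.even_or_odd n with h | h
  · rw [Even.neg_one_pow h, if_pos (Nat.even_iff.mp h)]
  · rw [Odd.neg_one_pow h, if_neg (by rw [Nat.odd_iff.mp h]; omega)]

lemma sum_swap4 {P U : Type*} [Fintype P] [Fintype U] (g : P → P → U → U → ℂ) :
    (∑ p, ∑ q, ∑ u, ∑ u', g p q u u') = ∑ u, ∑ u', ∑ p, ∑ q, g p q u u' :=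
  calc (∑ p, ∑ q, ∑ u, ∑ u', g p q u u')
      = ∑ p, ∑ u, ∑ q, ∑ u', g p q u u' :=
        Finset.sum_congr rfl fun p _ => Finset.sum_comm
    _ = ∑ u, ∑ p, ∑ q, ∑ u', g p q u u' := Finset.sum_comm
    _ = ∑ u, ∑ p, ∑ u', ∑ q, g p q u u' :=
        Finset.sum_congr rfl fun u _ =>
          Finset.sum_congr rfl fun p _ => Finset.sum_comm
    _ = ∑ u, ∑ u', ∑ p, ∑ q, g p q u u' :=
        Finset.sum_congr rfl fun u _ => Finset.sum_comm

lemma sum_factor {A : Type*} [Fintype A] (c : ℂ) (f g h k : A → A → ℂ) :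
    (∑ p : A × A, ∑ q : A × A, f p.1 p.2 * g q.2 q.1 * (c * (h p.1 p.2 * k q.2 q.1)))
      = c * (∑ a, ∑ b, f a b * h a b) * (∑ b', ∑ a', g b' a' * k b' a') := by
  have step1 : (∑ p : A × A, ∑ q : A × A,
      f p.1 p.2 * g q.2 q.1 * (c * (h p.1 p.2 * k q.2 q.1)))
        = ∑ p : A × A, ∑ q : A × A,
          c * (f p.1 p.2 * h p.1 p.2) * (g q.2 q.1 * k q.2 q.1) := by
    refine Finset.sum_congr rfl fun p _ => Finset.sum_congr rfl fun q _ => ?_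
    ring
  rw [step1]
  have step2 : (∑ p : A × A, ∑ q : A × A,
      c * (f p.1 p.2 * h p.1 p.2) * (g q.2 q.1 * k q.2 q.1))
        = c * (∑ p : A × A, f p.1 p.2 * h p.1 p.2) * (∑ q : A × A, g q.2 q.1 * k q.2 q.1) := by
    rw [Finset.sum_comm]
    rw [show (∑ q : A × A, ∑ p : A × A, c * (f p.1 p.2 * h p.1 p.2) * (g q.2 q.1 * k q.2 q.1))
        = ∑ q : A × A, (∑ p : A × A, c * (f p.1 p.2 * h p.1 p.2)) * (g q.2 q.1 * k q.2 q.1)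
      from Finset.sum_congr rfl fun q _ => (Finset.sum_mul _ _ _).symm]
    rw [← Finset.mul_sum, ← Finset.mul_sum]
  rw [step2]
  congr 1
  · congr 1
    rw [Fintype.sum_prod_type]
  · rw [Fintype.sum_prod_type, Finset.sum_comm]

open Kronecker in
theorem chi_block_diagonal_iff_valid (m : ℕ) (hm : 1 ≤ m)
    (χ : (Fin (2 * m) → Bool) → (Fin (2 * m) → Bool) → ℂ) :
    (parity m ⊗ₖ parity m) * choi (chiMap m χ) =
        choi (chiMap m χ) * (parity m ⊗ₖ parity m) ↔
      ∀ u u', hw u % 2 ≠ hw u' % 2 → χ u u' = 0 := by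
  set K := choi (chiMap m χ) with hK
  have hKe : ∀ p q : (Fin m → Fin 2) × (Fin m → Fin 2),
      K p q = ∑ u, ∑ u', χ u u' * (Cu m u p.1 p.2 * Cu m u' q.2 q.1) := by
    rintro ⟨a, b⟩ ⟨a', b'⟩
    rw [hK]
    exact choi_entry m χ a b a' b'
  constructor
  · -- commutation → validity
    intro hcomm u0 u0' hpar
    have hent : ∀ p q, (εf p.1 * εf p.2) * K p q = K p q * (εf q.1 * εf q.2) := by
      intro p q
      have h0 : ((parity m ⊗ₖ parity m) * K) p q = (K * (parity m ⊗ₖ parity m)) p q := by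
        rw [hcomm]
      rwa [kron_mul_apply, mul_kron_apply] at h0
    -- the quadruple overlap sum
    have hS0 : (∑ p : (Fin m → Fin 2) × (Fin m → Fin 2),
        ∑ q : (Fin m → Fin 2) × (Fin m → Fin 2),
        (starRingEnd ℂ) (Cu m u0 p.1 p.2) * (starRingEnd ℂ) (Cu m u0' q.2 q.1) * K p q)
          = 0 := by
      refine Finset.sum_eq_zero fun p _ => Finset.sum_eq_zero fun q _ => ?_
      by_cases hA : Cu m u0 p.1 p.2 = 0
      · simp [hA]
      by_cases hB : Cu m u0' q.2 q.1 = 0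
      · simp [hB]
      have e1 := Cu_support m u0 p.1 p.2 hA
      have e2 := Cu_support m u0' q.2 q.1 hB
      have hne : εf p.1 * εf p.2 ≠ εf q.1 * εf q.2 := by
        rw [e1, mul_comm (εf q.1) (εf q.2), e2, np, np]
        rcases Nat.mod_two_eq_zero_or_one (hw u0) with h0 | h0 <;>
          rcases Nat.mod_two_eq_zero_or_one (hw u0') with h1 | h1
        · exact absurd (h0.trans h1.symm) hpar
        · norm_num [h0, h1]
        · norm_num [h0, h1]
        · exact absurd (h0.trans h1.symm) hpar
      have hKz : K p q = 0 := by
        have h4 := hent p q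
        have h5 : (εf p.1 * εf p.2 - εf q.1 * εf q.2) * K p q = 0 := by
          linear_combination h4
        rcases mul_eq_zero.mp h5 with h6 | h6
        · exact absurd (sub_eq_zero.mp h6) hne
        · exact h6
      simp [hKz]
    have key : (∑ p : (Fin m → Fin 2) × (Fin m → Fin 2),
        ∑ q : (Fin m → Fin 2) × (Fin m → Fin 2),
        (starRingEnd ℂ) (Cu m u0 p.1 p.2) * (starRingEnd ℂ) (Cu m u0' q.2 q.1) * K p q)
          = ∑ u, ∑ u', χ u u' *
            (∑ a, ∑ b, (starRingEnd ℂ) (Cu m u0 a b) * Cu m u a b) *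
            (∑ b', ∑ a', (starRingEnd ℂ) (Cu m u0' b' a') * Cu m u' b' a') := by
      calc (∑ p : (Fin m → Fin 2) × (Fin m → Fin 2),
          ∑ q : (Fin m → Fin 2) × (Fin m → Fin 2),
          (starRingEnd ℂ) (Cu m u0 p.1 p.2) * (starRingEnd ℂ) (Cu m u0' q.2 q.1) * K p q)
          = ∑ p : (Fin m → Fin 2) × (Fin m → Fin 2),
            ∑ q : (Fin m → Fin 2) × (Fin m → Fin 2), ∑ u, ∑ u',
            (starRingEnd ℂ) (Cu m u0 p.1 p.2) * (starRingEnd ℂ) (Cu m u0' q.2 q.1) *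
              (χ u u' * (Cu m u p.1 p.2 * Cu m u' q.2 q.1)) := by
            refine Finset.sum_congr rfl fun p _ => Finset.sum_congr rfl fun q _ => ?_
            rw [hKe p q, Finset.mul_sum]
            refine Finset.sum_congr rfl fun u _ => ?_
            rw [Finset.mul_sum]
        _ = ∑ u, ∑ u', ∑ p : (Fin m → Fin 2) × (Fin m → Fin 2),
            ∑ q : (Fin m → Fin 2) × (Fin m → Fin 2),
            (starRingEnd ℂ) (Cu m u0 p.1 p.2) * (starRingEnd ℂ) (Cu m u0' q.2 q.1) *
              (χ u u' * (Cu m u p.1 p.2 * Cu m u' q.2 q.1)) := by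
            exact sum_swap4 _
        _ = ∑ u, ∑ u', χ u u' *
            (∑ a, ∑ b, (starRingEnd ℂ) (Cu m u0 a b) * Cu m u a b) *
            (∑ b', ∑ a', (starRingEnd ℂ) (Cu m u0' b' a') * Cu m u' b' a') := by
            refine Finset.sum_congr rfl fun u _ => Finset.sum_congr rfl fun u' _ => ?_
            exact sum_factor (χ u u') (fun a b => (starRingEnd ℂ) (Cu m u0 a b))
              (fun a b => (starRingEnd ℂ) (Cu m u0' a b))
              (fun a b => Cu m u a b) (fun a b => Cu m u' a b)
    rw [key] at hS0
    choose c0 hc0 he0 using fun u => Cu_orth m u0 u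
    choose c1 hc1 he1 using fun u' => Cu_orth m u0' u'
    simp only [he0, he1, mul_ite, ite_mul, mul_zero, zero_mul,
      Finset.sum_ite_eq, Finset.mem_univ, if_true] at hS0
    rcases mul_eq_zero.mp hS0 with h | h
    · rcases mul_eq_zero.mp h with h' | h'
      · exact h'
      · exact absurd h' (hc0 u0)
    · exact absurd h (hc1 u0')
  · -- validity → commutation
    intro hval
    ext p q
    rw [kron_mul_apply, mul_kron_apply, hKe p q]
    rw [Finset.mul_sum, Finset.sum_mul]
    refine Finset.sum_congr rfl fun u _ => ?_
    rw [Finset.mul_sum, Finset.sum_mul]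
    refine Finset.sum_congr rfl fun u' _ => ?_
    by_cases hχ : χ u u' = 0
    · simp [hχ]
    by_cases hA : Cu m u p.1 p.2 = 0
    · simp [hA]
    by_cases hB : Cu m u' q.2 q.1 = 0
    · simp [hB]
    have e1 := Cu_support m u p.1 p.2 hA
    have e2 := Cu_support m u' q.2 q.1 hB
    have hpar : hw u % 2 = hw u' % 2 := by
      by_contra hc; exact hχ (hval u u' hc)
    have heq : εf p.1 * εf p.2 = εf q.1 * εf q.2 := by
      rw [e1, mul_comm (εf q.1) (εf q.2), e2, np, np, hpar]
    rw [heq]; ring
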